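/- arXiv:2412.15472 — 5 statements merged into one kernel-verified Lean document; each statement's English description precedes it below -/
import Mathlib

section
/- For c ≥ −1, the modified harmonic function h_c satisfies Condition 3b if and only if −1 ≤ c ≤ 1/log 2 − 1 (≈ 0.443). -/
open scoped BigOperators

noncomputable section

namespace FairDiv

/-- The bundle of goods received by agent `i` under the assignment `A` of goods to agents. -/
def bundle {n m : ℕ} (A : Fin m → Fin n) (i : Fin n) : Finset (Fin m) :=
  Finset.univ.filter fun g => A g = i

/-- Additive utility of agent `i` for a set `S` of goods. -/
def util {n m : ℕ} (u : Fin n → Fin m → ℝ) (i : Fin n) (S : Finset (Fin m)) : ℝ :=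
  ∑ g ∈ S, u i g

/-- Envy-freeness up to one good. -/
def EF1 {n m : ℕ} (u : Fin n → Fin m → ℝ) (A : Fin m → Fin n) : Prop :=
  ∀ i j : Fin n, bundle A j ≠ ∅ →
    ∃ g ∈ bundle A j, util u i ((bundle A j).erase g) ≤ util u i (bundle A i)

/-- Welfare of an allocation under the additive welfarist rule with function `f`. -/
def welfare {n m : ℕ} (f : ℝ → EReal) (u : Fin n → Fin m → ℝ) (A : Fin m → Fin n) : EReal :=
  ∑ i : Fin n, f (util u i (bundle A i))

/-- An allocation is chosen by the additive welfarist rule with `f` if it maximizes welfare. -/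
def Chosen {n m : ℕ} (f : ℝ → EReal) (u : Fin n → Fin m → ℝ) (A : Fin m → Fin n) : Prop :=
  ∀ B : Fin m → Fin n, welfare f u B ≤ welfare f u A

/-- An instance is positive-admitting if some allocation gives everyone positive utility. -/
def PositiveAdmitting {n m : ℕ} (u : Fin n → Fin m → ℝ) : Prop :=
  ∃ B : Fin m → Fin n, ∀ i : Fin n, 0 < util u i (bundle B i)

def IdenticalGood {n m : ℕ} (u : Fin n → Fin m → ℝ) : Prop :=
  ∀ i : Fin n, ∃ a : ℝ, 0 < a ∧ ∀ g : Fin m, u i g = a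

def TwoValue {n m : ℕ} (u : Fin n → Fin m → ℝ) : Prop :=
  ∃ a₁ a₂ : ℝ, a₁ ≠ a₂ ∧ 0 ≤ a₁ ∧ 0 ≤ a₂ ∧ ∀ i g, u i g = a₁ ∨ u i g = a₂

def Normalized {n m : ℕ} (u : Fin n → Fin m → ℝ) : Prop :=
  ∀ i j : Fin n, util u i Finset.univ = util u j Finset.univ

def IntegerValued {n m : ℕ} (u : Fin n → Fin m → ℝ) : Prop :=
  ∀ i g, ∃ z : ℕ, u i g = (z : ℝ)

def Binary {n m : ℕ} (u : Fin n → Fin m → ℝ) : Prop :=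
  ∀ i g, u i g = 0 ∨ u i g = 1

/-- `Δ_{f,k}(x) = f((k+1)x) − f(kx)`, valued in `EReal` (it is `+∞` iff `f(kx) = −∞`). -/
def Delta (f : ℝ → EReal) (k : ℕ) (x : ℝ) : EReal :=
  f (((k : ℝ) + 1) * x) - f ((k : ℝ) * x)

/-- Condition 1: `Δ_{f,k}(b) > Δ_{f,k+1}(a)` for all `k ∈ ℤ≥0` and `a, b ∈ ℝ>0`. -/
def Cond1 (f : ℝ → EReal) : Prop :=
  ∀ k : ℕ, ∀ a b : ℝ, 0 < a → 0 < b → Delta f (k + 1) a < Delta f k b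

/-- Condition 1a: `Δ_{f,k}` is constant on `ℝ>0` for every `k ∈ ℤ>0`. -/
def Cond1a (f : ℝ → EReal) : Prop :=
  ∀ k : ℕ, 0 < k → ∀ x y : ℝ, 0 < x → 0 < y → Delta f k x = Delta f k y

/-- Condition 2. -/
def Cond2 (f : ℝ → EReal) : Prop :=
  ∀ a b c d : ℝ, 0 ≤ a → 0 ≤ b → 0 ≤ c → 0 ≤ d →
    min a b ≤ min c d → a * b < c * d → f a + f b < f c + f d

/-- Condition 3: `Δ_{f,k}(b) > Δ_{f,k+1}(a)` for all `k ∈ ℤ≥0` and `a, b ∈ ℤ>0`. -/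
def Cond3 (f : ℝ → EReal) : Prop :=
  ∀ k : ℕ, ∀ a b : ℕ, 0 < a → 0 < b → Delta f (k + 1) (a : ℝ) < Delta f k (b : ℝ)

/-- Condition 3a. -/
def Cond3a (f : ℝ → EReal) : Prop :=
  ∀ k l : ℕ, l < k → ∀ a b : ℕ, 0 < a → 0 < b → Delta f k (a : ℝ) < Delta f l (b : ℝ)

/-- Condition 3b: `Δ_{f,k}(1) > Δ_{f,k+1}(a) > Δ_{f,k+2}(1)` for `k ∈ ℤ≥0`, `a ∈ ℤ>0`. -/
def Cond3b (f : ℝ → EReal) : Prop :=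
  ∀ k : ℕ, ∀ a : ℕ, 0 < a →
    Delta f (k + 1) (a : ℝ) < Delta f k 1 ∧ Delta f (k + 2) 1 < Delta f (k + 1) (a : ℝ)

/-- Condition 4: `Δ_{f,k}(1) > Δ_{f,k+1}(1)` for all `k ∈ ℤ≥0`. -/
def Cond4 (f : ℝ → EReal) : Prop :=
  ∀ k : ℕ, Delta f (k + 1) 1 < Delta f k 1

/-- Condition 5. -/
def Cond5 (f : ℝ → EReal) : Prop :=
  ∀ a b k l r : ℕ, 0 < a → 0 < b → b ≤ a → l * b + r * a < (k + 1) * b →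
    Delta f (k + 1) (a : ℝ) <
        f (((l : ℝ) + 1) * (b : ℝ) + (r : ℝ) * (a : ℝ)) - f ((l : ℝ) * (b : ℝ) + (r : ℝ) * (a : ℝ))
      ∧ Delta f (k + 2) 1 < Delta f (k + 1) (a : ℝ)

/-- Condition 6a: `f((k+1)b−1) − f(kb−1) > Δ_{f,k}(a)` for all `k, a, b ∈ ℤ>0`. -/
def Cond6a (f : ℝ → EReal) : Prop :=
  ∀ k a b : ℕ, 0 < k → 0 < a → 0 < b →
    Delta f k (a : ℝ) < f (((k : ℝ) + 1) * (b : ℝ) - 1) - f ((k : ℝ) * (b : ℝ) - 1)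

/-- Condition 6b: `f(y+b) − f(y) > f(x+a) − f(x)` whenever `x/a ≥ (y+1)/b`. -/
def Cond6b (f : ℝ → EReal) : Prop :=
  ∀ a b : ℕ, ∀ x y : ℕ, 0 < a → 0 < b → ((y : ℝ) + 1) / (b : ℝ) ≤ (x : ℝ) / (a : ℝ) →
    f ((x : ℝ) + (a : ℝ)) - f (x : ℝ) < f ((y : ℝ) + (b : ℝ)) - f (y : ℝ)

/-- Modified logarithmic function `λ_c(x) = log (x + c)`, with `log 0 = −∞`. -/
def lam (c : ℝ) (x : ℝ) : EReal :=
  if x + c = 0 then ⊥ else ((Real.log (x + c) : ℝ) : EReal)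

/-- The `p`-mean function `φ_p`, with `φ_p(0) = −∞` for `p ≤ 0`. -/
def phi (p : ℝ) (x : ℝ) : EReal :=
  if 0 < p then ((x ^ p : ℝ) : EReal)
  else if x = 0 then ⊥
  else if p = 0 then ((Real.log x : ℝ) : EReal)
  else ((-(x ^ p) : ℝ) : EReal)

/-- Modified harmonic number `h_c` on nonnegative integers. -/
def hmod (c : ℝ) (x : ℕ) : EReal :=
  if c = -1 then
    (if x = 0 then (⊥ : EReal)
     else (((∑ t ∈ Finset.range (x - 1), (1 : ℝ) / ((t : ℝ) + 1)) : ℝ) : EReal))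
  else (((∑ t ∈ Finset.range x, (1 : ℝ) / ((t : ℝ) + 1 + c)) : ℝ) : EReal)

/-- Condition 3b for a function defined on nonnegative integers. -/
def Cond3bNat (f : ℕ → EReal) : Prop :=
  ∀ k : ℕ, ∀ a : ℕ, 0 < a →
    f ((k + 2) * a) - f ((k + 1) * a) < f (k + 1) - f k
    ∧ f (k + 3) - f (k + 2) < f ((k + 2) * a) - f ((k + 1) * a)

-- log upper bound: log(v+1)-log v ≤ 1/v
lemma logub (v : ℝ) (hv : 0 < v) : Real.log (v+1) - Real.log v ≤ 1 / v := by
  have h1 : Real.log ((v+1)/v) ≤ (v+1)/v - 1 := Real.log_le_sub_one_of_pos (by positivity)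
  rw [Real.log_div (by linarith) (by linarith)] at h1
  have : (v+1)/v - 1 = 1/v := by field_simp; ring
  linarith [this ▸ h1]

-- log lower: 1 - 1/x ≤ log x
lemma loglb (x : ℝ) (hx : 0 < x) : 1 - 1/x ≤ Real.log x := by
  have h1 : Real.log (1/x) ≤ 1/x - 1 := Real.log_le_sub_one_of_pos (by positivity)
  rw [one_div, Real.log_inv, inv_eq_one_div] at h1
  linarith

-- series lower bound, T6
lemma log_ge_T6 (x : ℝ) (h0 : 0 < x) (h : x ≤ 1/4) :
    x - x^2/2 + x^3/3 - x^4/4 + x^5/5 - x^6/6 - (4/3)*x^7 ≤ Real.log (1+x) := by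
  have hx : |(-x)| < 1 := by rw [abs_neg, abs_of_pos h0]; linarith
  have := Real.abs_log_sub_add_sum_range_le hx 6
  rw [abs_le] at this
  have h2 := this.1
  simp only [Finset.sum_range_succ, Finset.sum_range_zero] at h2
  rw [abs_neg, abs_of_pos h0] at h2
  have hrem : x^(6+1)/(1-x) ≤ (4/3)*x^7 := by
    rw [div_le_iff₀ (by linarith)]
    nlinarith [pow_nonneg h0.le 7, pow_nonneg h0.le 8]
  have hsub : (1 : ℝ) - (-x) = 1 + x := by ring
  rw [hsub] at h2
  nlinarith [h2, hrem]

-- series upper bound, T8 + (3/2)x^9 for x ≤ 1/3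
lemma log_le_T8 (x : ℝ) (h0 : 0 < x) (h : x ≤ 1/3) :
    Real.log (1+x) ≤ x - x^2/2 + x^3/3 - x^4/4 + x^5/5 - x^6/6 + x^7/7 - x^8/8 + (3/2)*x^9 := by
  have hx : |(-x)| < 1 := by rw [abs_neg, abs_of_pos h0]; linarith
  have := Real.abs_log_sub_add_sum_range_le hx 8
  rw [abs_le] at this
  have h2 := this.2
  simp only [Finset.sum_range_succ, Finset.sum_range_zero] at h2
  rw [abs_neg, abs_of_pos h0] at h2
  have hrem : x^(8+1)/(1-x) ≤ (3/2)*x^9 := by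
    rw [div_le_iff₀ (by linarith)]
    nlinarith [pow_nonneg h0.le 9, pow_nonneg h0.le 10]
  have hsub : (1 : ℝ) - (-x) = 1 + x := by ring
  rw [hsub] at h2
  nlinarith [h2, hrem]

lemma log_3half : Real.log (1+(1/2:ℝ)) ≤ 0.4075 := by
  have hx : |(-(1/2):ℝ)| < 1 := by rw [abs_neg]; rw [abs_of_pos] <;> norm_num
  have := Real.abs_log_sub_add_sum_range_le hx 9
  rw [abs_le] at this
  have h2 := this.2
  simp only [Finset.sum_range_succ, Finset.sum_range_zero] at h2
  rw [abs_neg, abs_of_pos (by norm_num : (0:ℝ) < 1/2)] at h2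
  norm_num at h2 ⊢
  linarith

lemma logA (u : ℝ) (hu : 4 ≤ u) : 1/(u + 1/2) < Real.log (u+1) - Real.log u := by
  have hu0 : 0 < u := by linarith
  set x : ℝ := 1/u with hxdef
  have hx0 : 0 < x := by positivity
  have hx4 : x ≤ 1/4 := by
    rw [hxdef, div_le_div_iff₀ hu0 (by norm_num)]; linarith
  have hlog : Real.log (u+1) - Real.log u = Real.log (1+x) := by
    rw [← Real.log_div (by linarith) (by linarith)]
    congr 1
    rw [hxdef]
    field_simp
  have hfrac : 1/(u+1/2) = x/(1+x/2) := by
    rw [hxdef]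
    rw [div_eq_div_iff (by linarith) (by positivity)]
    field_simp
  rw [hlog, hfrac]
  have hT := log_ge_T6 x hx0 hx4
  have hpoly : x/(1+x/2) < x - x^2/2 + x^3/3 - x^4/4 + x^5/5 - x^6/6 - (4/3)*x^7 := by
    rw [div_lt_iff₀ (by linarith)]
    nlinarith [pow_pos hx0 3, pow_pos hx0 4, pow_pos hx0 5, pow_pos hx0 6, pow_pos hx0 7,
      pow_pos hx0 8, mul_pos hx0 hx0, sq_nonneg x, sq_nonneg (x-1/4),
      mul_nonneg (mul_nonneg hx0.le hx0.le) hx0.le]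
  linarith

lemma c_upper {c : ℝ} (h : c ≤ 1/Real.log 2 - 1) : c ≤ 0.4427 := by
  have h2 : (0.6931471803:ℝ) < Real.log 2 := Real.log_two_gt_d9
  have : 1/Real.log 2 < 1/0.6931471803 := by
    apply one_div_lt_one_div_of_lt (by norm_num) h2
  nlinarith

lemma stepB (n : ℕ) (hn : 1 ≤ n) (c : ℝ) (hc0 : 0 < c) (hγ : c ≤ 1/Real.log 2 - 1) :
    Real.log ((n:ℝ)+1) - Real.log n ≤ 1/((n:ℝ)+c) := by
  have hl2 : (0:ℝ) < Real.log 2 := Real.log_pos (by norm_num)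
  have hc4427 := c_upper hγ
  match n, hn with
  | 1, _ =>
    have h1 : (1:ℝ)+c ≤ 1/Real.log 2 := by linarith
    have h2 : Real.log 2 * (1+c) ≤ 1 := by
      calc Real.log 2 * (1+c) ≤ Real.log 2 * (1/Real.log 2) := by nlinarith
      _ = 1 := by field_simp
    have h3 : Real.log 2 ≤ 1/(1+c) := by
      rw [le_div_iff₀ (by linarith)]; linarith
    simp only [Nat.cast_one, Real.log_one]
    have he : (1:ℝ)+1 = 2 := by norm_num
    rw [he]
    linarith
  | (m+2), _ =>
    set n' : ℕ := m + 2 with hn'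
    have hn3 : (2:ℝ) ≤ (n':ℝ) := by
      have : (2:ℕ) ≤ n' := by omega
      exact_mod_cast this
    have hnpos : (0:ℝ) < n' := by linarith
    set x : ℝ := 1/(n':ℝ) with hxdef
    have hx0 : 0 < x := by positivity
    have hx2 : x ≤ 1/2 := by rw [hxdef, div_le_div_iff₀ hnpos (by norm_num)]; linarith
    have hlog : Real.log ((n':ℝ)+1) - Real.log n' = Real.log (1+x) := by
      rw [← Real.log_div (by linarith) (by linarith)]
      congr 1
      rw [hxdef]
      field_simp
    have htarget : (1:ℝ)/((n':ℝ)+0.4427) = x/(1+0.4427*x) := by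
      rw [hxdef, div_eq_div_iff (by linarith) (by positivity)]
      field_simp
    have hmono : (1:ℝ)/((n':ℝ)+0.4427) ≤ 1/((n':ℝ)+c) := by
      apply one_div_le_one_div_of_le (by linarith) (by linarith)
    rw [hlog]
    refine le_trans ?_ hmono
    rw [htarget]
    rcases eq_or_lt_of_le hn3 with h2 | h3
    · have hx : x = 1/2 := by rw [hxdef, ← h2]
      rw [hx]
      calc Real.log (1+1/2) ≤ 0.4075 := log_3half
        _ ≤ 1/2/(1+0.4427*(1/2)) := by norm_num
    · have hx3 : x ≤ 1/3 := by
        rw [hxdef, div_le_div_iff₀ hnpos (by norm_num)]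
        have h4 : (2:ℕ) < n' := by exact_mod_cast h3
        have : (3:ℕ) ≤ n' := h4
        have : (3:ℝ) ≤ (n':ℝ) := by exact_mod_cast this
        linarith
      have hT := log_le_T8 x hx0 hx3
      have hpoly : x - x^2/2 + x^3/3 - x^4/4 + x^5/5 - x^6/6 + x^7/7 - x^8/8 + (3/2)*x^9
          ≤ x/(1+0.4427*x) := by
        rw [le_div_iff₀ (by nlinarith)]
        nlinarith [pow_pos hx0 2, pow_pos hx0 3, pow_pos hx0 4, pow_pos hx0 5, pow_pos hx0 6,
          pow_pos hx0 7, pow_pos hx0 8, pow_pos hx0 9, pow_pos hx0 10, sq_nonneg (x - 1/3)]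
      linarith

-- generic sum upper bound by first term
lemma sum_ub (c : ℝ) (N M : ℕ) (h : N ≤ M) (hpos : 0 < (N:ℝ)+1+c) :
    ∑ t ∈ Finset.Ico N M, 1/((t:ℝ)+1+c) ≤ ((M:ℝ)-(N:ℝ)) * (1/((N:ℝ)+1+c)) := by
  have := Finset.sum_le_card_nsmul (Finset.Ico N M) (fun t => 1/((t:ℝ)+1+c))
    (1/((N:ℝ)+1+c)) ?_
  · rw [Nat.card_Ico, nsmul_eq_mul] at this
    rwa [Nat.cast_sub h] at this
  · intro t ht
    rw [Finset.mem_Ico] at ht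
    have h1 : (N:ℝ) ≤ t := by exact_mod_cast ht.1
    apply one_div_le_one_div_of_le hpos (by linarith)

-- generic sum lower bound by last term
lemma sum_lb (c : ℝ) (N M : ℕ) (h : N ≤ M) (hpos : 0 < (N:ℝ)+1+c) :
    ((M:ℝ)-(N:ℝ)) * (1/((M:ℝ)+c)) ≤ ∑ t ∈ Finset.Ico N M, 1/((t:ℝ)+1+c) := by
  have := Finset.card_nsmul_le_sum (Finset.Ico N M) (fun t => 1/((t:ℝ)+1+c))
    (1/((M:ℝ)+c)) ?_
  · rw [Nat.card_Ico, nsmul_eq_mul] at this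
    rwa [Nat.cast_sub h] at this
  · intro t ht
    rw [Finset.mem_Ico] at ht
    have h1 : (N:ℝ) ≤ t := by exact_mod_cast ht.1
    have h2 : (t:ℝ)+1 ≤ M := by exact_mod_cast ht.2
    apply one_div_le_one_div_of_le (by linarith) (by linarith)

-- telescoping identity
lemma tel (g : ℕ → ℝ) (N M : ℕ) (h : N ≤ M) :
    ∑ t ∈ Finset.Ico N M, (g (t+1) - g t) = g M - g N := by
  rw [Finset.sum_Ico_eq_sub _ h, Finset.sum_range_sub g, Finset.sum_range_sub g]
  ring

-- log lower bound on sum (for forward direction)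
lemma sum_ge_log (c : ℝ) (hc : -1 < c) (N M : ℕ) (h : N ≤ M) :
    Real.log ((M:ℝ)+1+c) - Real.log ((N:ℝ)+1+c) ≤ ∑ t ∈ Finset.Ico N M, 1/((t:ℝ)+1+c) := by
  have := tel (fun t => Real.log ((t:ℝ)+1+c)) N M h
  rw [← this]
  apply Finset.sum_le_sum
  intro t ht
  have hv : 0 < (t:ℝ)+1+c := by
    have : (0:ℝ) ≤ t := Nat.cast_nonneg t
    linarith
  have := logub ((t:ℝ)+1+c) hv
  have hcast : ((t+1:ℕ):ℝ) = (t:ℝ)+1 := by push_cast; ring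
  simp only [hcast]
  calc Real.log ((t:ℝ)+1+1+c) - Real.log ((t:ℝ)+1+c)
      = Real.log (((t:ℝ)+1+c)+1) - Real.log ((t:ℝ)+1+c) := by ring_nf
    _ ≤ 1/((t:ℝ)+1+c) := this

-- strict log upper bound on sum (for the hard branch)
lemma sum_lt_log (c : ℝ) (hc0 : 0 < c) (N M : ℕ) (hN : 4 ≤ N) (hNM : N < M) :
    ∑ t ∈ Finset.Ico N M, 1/((t:ℝ)+1+c)
      < Real.log ((M:ℝ)+c+1/2) - Real.log ((N:ℝ)+c+1/2) := by
  have := tel (fun t => Real.log ((t:ℝ)+c+1/2)) N M hNM.le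
  rw [← this]
  apply Finset.sum_lt_sum_of_nonempty (Finset.nonempty_Ico.mpr hNM)
  intro t ht
  rw [Finset.mem_Ico] at ht
  have h4 : (4:ℝ) ≤ t := by exact_mod_cast hN.trans ht.1
  have hu : 4 ≤ (t:ℝ)+c+1/2 := by linarith
  have := logA ((t:ℝ)+c+1/2) hu
  have hcast : ((t+1:ℕ):ℝ) = (t:ℝ)+1 := by push_cast; ring
  simp only [hcast]
  calc 1/((t:ℝ)+1+c) = 1/(((t:ℝ)+c+1/2)+1/2) := by ring_nf
    _ < Real.log (((t:ℝ)+c+1/2)+1) - Real.log ((t:ℝ)+c+1/2) := this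
    _ = Real.log ((t:ℝ)+1+c+1/2) - Real.log ((t:ℝ)+c+1/2) := by ring_nf

lemma log_diff_le (c : ℝ) (hc0 : 0 < c) (k a : ℕ) (ha : 0 < a) :
    Real.log ((((k+2)*a:ℕ):ℝ)+c+1/2) - Real.log ((((k+1)*a:ℕ):ℝ)+c+1/2)
      ≤ Real.log ((k:ℝ)+2) - Real.log ((k:ℝ)+1) := by
  have ha1 : (1:ℝ) ≤ a := by exact_mod_cast ha
  have hk0 : (0:ℝ) ≤ k := Nat.cast_nonneg k
  have hM : (((k+2)*a:ℕ):ℝ) = ((k:ℝ)+2)*a := by push_cast; ring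
  have hN : (((k+1)*a:ℕ):ℝ) = ((k:ℝ)+1)*a := by push_cast; ring
  rw [hM, hN]
  set P : ℝ := ((k:ℝ)+2)*a + c + 1/2 with hP
  set Q : ℝ := ((k:ℝ)+1)*a + c + 1/2 with hQ
  have hPpos : 0 < P := by rw [hP]; nlinarith
  have hQpos : 0 < Q := by rw [hQ]; nlinarith
  have hk1 : (0:ℝ) < (k:ℝ)+1 := by linarith
  have hk2 : (0:ℝ) < (k:ℝ)+2 := by linarith
  have key : P * ((k:ℝ)+1) ≤ Q * ((k:ℝ)+2) := by rw [hP, hQ]; nlinarith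
  have h1 : Real.log (P * ((k:ℝ)+1)) ≤ Real.log (Q * ((k:ℝ)+2)) :=
    Real.log_le_log (by positivity) key
  rw [Real.log_mul (by positivity) (by positivity),
      Real.log_mul (by positivity) (by positivity)] at h1
  linarith

lemma core_i (c : ℝ) (hc : -1 < c) (hγ : c ≤ 1/Real.log 2 - 1) (k a : ℕ) (ha : 0 < a) :
    ∑ t ∈ Finset.Ico ((k+1)*a) ((k+2)*a), 1/((t:ℝ)+1+c) < 1/((k:ℝ)+1+c) := by
  have ha1 : (1:ℝ) ≤ a := by exact_mod_cast ha
  have hk0 : (0:ℝ) ≤ k := Nat.cast_nonneg k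
  have hle : (k+1)*a ≤ (k+2)*a := Nat.mul_le_mul_right a (by omega)
  have hlt : (k+1)*a < (k+2)*a := by
    have : k+1 < k+2 := by omega
    exact Nat.mul_lt_mul_of_lt_of_le this (le_refl a) ha
  have hN : (((k+1)*a:ℕ):ℝ) = ((k:ℝ)+1)*a := by push_cast; ring
  have hM : (((k+2)*a:ℕ):ℝ) = ((k:ℝ)+2)*a := by push_cast; ring
  have hNpos : 0 < (((k+1)*a:ℕ):ℝ)+1+c := by rw [hN]; nlinarith
  have hkc : 0 < (k:ℝ)+1+c := by linarith
  by_cases hel : c*((a:ℝ)-1) < 1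
  · have h1 := sum_ub c ((k+1)*a) ((k+2)*a) hle hNpos
    have h2 : ((((k+2)*a:ℕ)):ℝ) - (((k+1)*a:ℕ):ℝ) = a := by rw [hM, hN]; ring
    rw [h2, hN] at h1
    have h3 : (a:ℝ) * (1/(((k:ℝ)+1)*a+1+c)) < 1/((k:ℝ)+1+c) := by
      rw [mul_one_div, div_lt_div_iff₀ (by nlinarith) hkc]
      nlinarith
    calc ∑ t ∈ Finset.Ico ((k+1)*a) ((k+2)*a), 1/((t:ℝ)+1+c)
        ≤ (a:ℝ) * (1/(((k:ℝ)+1)*a+1+c)) := h1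
      _ < 1/((k:ℝ)+1+c) := h3
  · push_neg at hel
    have hc0 : 0 < c := by
      by_contra h
      push_neg at h
      nlinarith
    have hc4 : c ≤ 0.4427 := c_upper hγ
    have ha4 : 4 ≤ a := by
      by_contra h
      push_neg at h
      have : (a:ℝ) ≤ 3 := by exact_mod_cast Nat.lt_succ_iff.mp h
      nlinarith
    have hN4 : 4 ≤ (k+1)*a := le_trans ha4 (Nat.le_mul_of_pos_left a (by omega))
    have h1 := sum_lt_log c hc0 ((k+1)*a) ((k+2)*a) hN4 hlt
    have h2 := log_diff_le c hc0 k a ha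
    have h3 := stepB (k+1) (by omega) c hc0 hγ
    have hcast : ((k+1:ℕ):ℝ) = (k:ℝ)+1 := by push_cast; ring
    rw [hcast] at h3
    have h3' : Real.log ((k:ℝ)+2) - Real.log ((k:ℝ)+1) ≤ 1/((k:ℝ)+1+c) := by
      have : (k:ℝ)+1+1 = (k:ℝ)+2 := by ring
      rw [this] at h3
      exact h3
    linarith

lemma core_ii (c : ℝ) (hc : -1 < c) (k a : ℕ) (ha : 0 < a) :
    1/((k:ℝ)+3+c) < ∑ t ∈ Finset.Ico ((k+1)*a) ((k+2)*a), 1/((t:ℝ)+1+c) := by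
  have ha1 : (1:ℝ) ≤ a := by exact_mod_cast ha
  have hk0 : (0:ℝ) ≤ k := Nat.cast_nonneg k
  have hle : (k+1)*a ≤ (k+2)*a := Nat.mul_le_mul_right a (by omega)
  have hN : (((k+1)*a:ℕ):ℝ) = ((k:ℝ)+1)*a := by push_cast; ring
  have hM : (((k+2)*a:ℕ):ℝ) = ((k:ℝ)+2)*a := by push_cast; ring
  have hNpos : 0 < (((k+1)*a:ℕ):ℝ)+1+c := by rw [hN]; nlinarith
  have h1 := sum_lb c ((k+1)*a) ((k+2)*a) hle hNpos
  have h2 : ((((k+2)*a:ℕ)):ℝ) - (((k+1)*a:ℕ):ℝ) = a := by rw [hM, hN]; ring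
  rw [h2, hM] at h1
  have h3 : 1/((k:ℝ)+3+c) < (a:ℝ) * (1/(((k:ℝ)+2)*a+c)) := by
    rw [mul_one_div, div_lt_div_iff₀ (by nlinarith) (by nlinarith)]
    nlinarith
  linarith

lemma zero_conv (N M : ℕ) :
    ∑ t ∈ Finset.Ico N M, (1:ℝ)/((t:ℝ)+1) = ∑ t ∈ Finset.Ico N M, 1/((t:ℝ)+1+0) := by
  apply Finset.sum_congr rfl
  intro t _
  norm_num

lemma m1_i (j a : ℕ) (ha : 0 < a) :
    ∑ t ∈ Finset.Ico ((j+2)*a - 1) ((j+3)*a - 1), (1:ℝ)/((t:ℝ)+1) < 1/((j:ℝ)+1) := by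
  have ha1 : (1:ℝ) ≤ a := by exact_mod_cast ha
  have hj0 : (0:ℝ) ≤ j := Nat.cast_nonneg j
  have h2a : 1 ≤ (j+2)*a := Nat.one_le_iff_ne_zero.mpr (Nat.mul_ne_zero (by omega) (by omega))
  have h3a : 1 ≤ (j+3)*a := Nat.one_le_iff_ne_zero.mpr (Nat.mul_ne_zero (by omega) (by omega))
  have hle23 : (j+2)*a ≤ (j+3)*a := Nat.mul_le_mul_right a (by omega)
  have hle : (j+2)*a - 1 ≤ (j+3)*a - 1 := by omega
  have hNc : ((((j+2)*a - 1 : ℕ)):ℝ) = ((j:ℝ)+2)*a - 1 := by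
    rw [Nat.cast_sub h2a]; push_cast; ring
  have hMc : ((((j+3)*a - 1 : ℕ)):ℝ) = ((j:ℝ)+3)*a - 1 := by
    rw [Nat.cast_sub h3a]; push_cast; ring
  have hpos : 0 < ((((j+2)*a - 1 : ℕ)):ℝ)+1+0 := by rw [hNc]; nlinarith
  rw [zero_conv]
  have h1 := sum_ub 0 ((j+2)*a - 1) ((j+3)*a - 1) hle hpos
  rw [hNc, hMc] at h1
  have h2 : ((j:ℝ)+3)*a - 1 - (((j:ℝ)+2)*a - 1) = a := by ring
  rw [h2] at h1
  have h3 : (a:ℝ) * (1/(((j:ℝ)+2)*a - 1 + 1 + 0)) < 1/((j:ℝ)+1) := by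
    have he : ((j:ℝ)+2)*a - 1 + 1 + 0 = ((j:ℝ)+2)*a := by ring
    rw [he, mul_one_div, div_lt_div_iff₀ (by nlinarith) (by nlinarith)]
    nlinarith
  linarith

lemma m1_ii (k a : ℕ) (ha : 0 < a) :
    1/((k:ℝ)+2) < ∑ t ∈ Finset.Ico ((k+1)*a - 1) ((k+2)*a - 1), (1:ℝ)/((t:ℝ)+1) := by
  have ha1 : (1:ℝ) ≤ a := by exact_mod_cast ha
  have hk0 : (0:ℝ) ≤ k := Nat.cast_nonneg k
  have h1a : 1 ≤ (k+1)*a := Nat.one_le_iff_ne_zero.mpr (Nat.mul_ne_zero (by omega) (by omega))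
  have h2a : 1 ≤ (k+2)*a := Nat.one_le_iff_ne_zero.mpr (Nat.mul_ne_zero (by omega) (by omega))
  have hle : (k+1)*a - 1 ≤ (k+2)*a - 1 := by
    have : (k+1)*a ≤ (k+2)*a := Nat.mul_le_mul_right a (by omega)
    omega
  have hNc : ((((k+1)*a - 1 : ℕ)):ℝ) = ((k:ℝ)+1)*a - 1 := by
    rw [Nat.cast_sub h1a]; push_cast; ring
  have hMc : ((((k+2)*a - 1 : ℕ)):ℝ) = ((k:ℝ)+2)*a - 1 := by
    rw [Nat.cast_sub h2a]; push_cast; ring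
  have hpos : 0 < ((((k+1)*a - 1 : ℕ)):ℝ)+1+0 := by rw [hNc]; nlinarith
  rw [zero_conv]
  have h1 := sum_lb 0 ((k+1)*a - 1) ((k+2)*a - 1) hle hpos
  rw [hNc, hMc] at h1
  have h2 : ((k:ℝ)+2)*a - 1 - (((k:ℝ)+1)*a - 1) = a := by ring
  rw [h2] at h1
  have h3 : 1/((k:ℝ)+2) < (a:ℝ) * (1/(((k:ℝ)+2)*a - 1 + 0)) := by
    have he : ((k:ℝ)+2)*a - 1 + 0 = ((k:ℝ)+2)*a - 1 := by ring
    rw [he, mul_one_div, div_lt_div_iff₀ (by nlinarith) (by nlinarith)]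
    nlinarith
  linarith


theorem hmod_cond3b (c : ℝ) (hc : -1 ≤ c) :
    Cond3bNat (hmod c) ↔ (-1 ≤ c ∧ c ≤ 1 / Real.log 2 - 1) := by
  have hl2 : (0:ℝ) < Real.log 2 := Real.log_pos (by norm_num)
  constructor
  · intro H
    refine ⟨hc, ?_⟩
    by_cases hcm : c = -1
    · have : 0 < 1/Real.log 2 := by positivity
      rw [hcm]; linarith
    have hc' : -1 < c := lt_of_le_of_ne hc (Ne.symm hcm)
    have h1c : (0:ℝ) < 1 + c := by linarith
    by_contra hlt
    push_neg at hlt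
    have e1 : Real.log 2 * (1/Real.log 2) = 1 := by field_simp
    have h2 : 1 < Real.log 2 * (1 + c) := by nlinarith
    have hεpos : 0 < Real.log 2 - 1/(1+c) := by
      have : 1/(1+c) < Real.log 2 := by rw [div_lt_iff₀ h1c]; linarith
      linarith
    set ε := Real.log 2 - 1/(1+c) with hεdef
    set a : ℕ := ⌈(1+c)/ε⌉₊ + 1 with ha_def
    have ha : 0 < a := Nat.succ_pos _
    have ha1 : (1:ℝ) ≤ a := by exact_mod_cast ha
    have haε : (1+c)/ε ≤ (a:ℝ) := by
      refine (Nat.le_ceil _).trans ?_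
      exact_mod_cast Nat.le_succ _
    have haε2 : 1 + c ≤ (a:ℝ) * ε := by
      rw [div_le_iff₀ hεpos] at haε
      linarith
    obtain ⟨h1, -⟩ := H 0 a ha
    simp only [hmod, if_neg hcm] at h1
    rw [← EReal.coe_sub, ← EReal.coe_sub, EReal.coe_lt_coe_iff] at h1
    have hle : (0+1)*a ≤ (0+2)*a := Nat.mul_le_mul_right a (by omega)
    rw [← Finset.sum_Ico_eq_sub _ hle] at h1
    have hrhs : ∑ t ∈ Finset.range (0+1), (1:ℝ)/((t:ℝ)+1+c)
        - ∑ t ∈ Finset.range 0, (1:ℝ)/((t:ℝ)+1+c) = 1/(1+c) := by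
      simp [Finset.sum_range_succ]
    rw [hrhs] at h1
    -- lower bound the sum by logs
    have h3 := sum_ge_log c hc' ((0+1)*a) ((0+2)*a) hle
    have hMc : (((0+2)*a : ℕ):ℝ) = 2*(a:ℝ) := by push_cast; ring
    have hNc : (((0+1)*a : ℕ):ℝ) = (a:ℝ) := by push_cast; ring
    rw [hMc, hNc] at h3
    have hXpos : (0:ℝ) < 2*(a:ℝ)+1+c := by linarith
    have hYpos : (0:ℝ) < (a:ℝ)+1+c := by linarith
    have h4 : Real.log 2 - (1+c)/(2*(a:ℝ)+1+c)
        ≤ Real.log (2*(a:ℝ)+1+c) - Real.log ((a:ℝ)+1+c) := by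
      have hX : (0:ℝ) < (2*(a:ℝ)+1+c)/(2*((a:ℝ)+1+c)) := by positivity
      have h5 := loglb ((2*(a:ℝ)+1+c)/(2*((a:ℝ)+1+c))) hX
      rw [Real.log_div (by linarith) (by positivity)] at h5
      rw [Real.log_mul (by norm_num) (by linarith)] at h5
      have h6 : 1 - 1/((2*(a:ℝ)+1+c)/(2*((a:ℝ)+1+c)))
          = -((1+c)/(2*(a:ℝ)+1+c)) := by
        rw [one_div_div]
        field_simp
        ring
      rw [h6] at h5
      linarith
    have h7 : (1+c)/(2*(a:ℝ)+1+c) < ε := by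
      have h8 : (1+c)/(2*(a:ℝ)+1+c) ≤ (1+c)/(2*(a:ℝ)) := by
        apply div_le_div_of_nonneg_left (by linarith) (by linarith) (by linarith)
      have h9 : (1+c)/(2*(a:ℝ)) < ε := by
        rw [div_lt_iff₀ (by linarith)]
        nlinarith
      linarith
    have : 1/(1+c) = Real.log 2 - ε := by rw [hεdef]; ring
    linarith
  · rintro ⟨-, hγ⟩
    intro k a ha
    by_cases hcm : c = -1
    · subst hcm
      have hpa1 : (k+1)*a ≠ 0 := Nat.mul_ne_zero (by omega) (by omega)
      have hpa2 : (k+2)*a ≠ 0 := Nat.mul_ne_zero (by omega) (by omega)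
      have hle12 : (k+1)*a ≤ (k+2)*a := Nat.mul_le_mul_right a (by omega)
      have hle : (k+1)*a - 1 ≤ (k+2)*a - 1 := by omega
      constructor
      · rcases Nat.eq_zero_or_pos k with hk | hk
        · subst hk
          have h10 : (0+1 : ℕ) ≠ 0 := by omega
          simp only [hmod, if_pos rfl, if_neg hpa1, if_neg hpa2, if_neg h10, if_true]
          rw [← EReal.coe_sub]
          exact lt_of_lt_of_eq (EReal.coe_lt_top _) (by rfl)
        · obtain ⟨j, rfl⟩ : ∃ j, k = j+1 := ⟨k-1, by omega⟩
          have hj1 : j+1+1 ≠ 0 := by omega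
          have hj2 : j+1 ≠ 0 := by omega
          simp only [hmod, if_pos rfl, if_neg hpa1, if_neg hpa2, if_neg hj1, if_neg hj2,
            if_true]
          rw [← EReal.coe_sub, ← EReal.coe_sub, EReal.coe_lt_coe_iff]
          rw [← Finset.sum_Ico_eq_sub _ hle]
          have e1 : j+1+1-1 = j+1 := by omega
          have e2 : j+1-1 = j := by omega
          rw [e1, e2]
          have hrhs : ∑ t ∈ Finset.range (j+1), (1:ℝ)/((t:ℝ)+1)
              - ∑ t ∈ Finset.range j, (1:ℝ)/((t:ℝ)+1) = 1/((j:ℝ)+1) := by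
            rw [Finset.sum_range_succ]; ring
          rw [hrhs]
          have := m1_i j a ha
          have e3 : (j+1+1)*a = (j+2)*a := by ring_nf
          have e4 : (j+1+2)*a = (j+3)*a := by ring_nf
          rw [e3, e4]
          exact this
      · have hk3 : k+3 ≠ 0 := by omega
        have hk2 : k+2 ≠ 0 := by omega
        simp only [hmod, if_pos rfl, if_neg hpa1, if_neg hpa2, if_neg hk3, if_neg hk2,
          if_true]
        rw [← EReal.coe_sub, ← EReal.coe_sub, EReal.coe_lt_coe_iff]
        rw [← Finset.sum_Ico_eq_sub _ hle]
        have e1 : k+3-1 = k+2 := by omega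
        have e2 : k+2-1 = k+1 := by omega
        rw [e1, e2]
        have hlhs : ∑ t ∈ Finset.range (k+2), (1:ℝ)/((t:ℝ)+1)
            - ∑ t ∈ Finset.range (k+1), (1:ℝ)/((t:ℝ)+1) = 1/((k:ℝ)+2) := by
          rw [Finset.sum_range_succ]
          push_cast
          ring
        rw [hlhs]
        exact m1_ii k a ha
    · have hc' : -1 < c := lt_of_le_of_ne hc (Ne.symm hcm)
      have hle : (k+1)*a ≤ (k+2)*a := Nat.mul_le_mul_right a (by omega)
      constructor
      · simp only [hmod, if_neg hcm]
        rw [← EReal.coe_sub, ← EReal.coe_sub, EReal.coe_lt_coe_iff]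
        rw [← Finset.sum_Ico_eq_sub _ hle]
        have hrhs : ∑ t ∈ Finset.range (k+1), (1:ℝ)/((t:ℝ)+1+c)
            - ∑ t ∈ Finset.range k, (1:ℝ)/((t:ℝ)+1+c) = 1/((k:ℝ)+1+c) := by
          rw [Finset.sum_range_succ]; ring
        rw [hrhs]
        exact core_i c hc' hγ k a ha
      · simp only [hmod, if_neg hcm]
        rw [← EReal.coe_sub, ← EReal.coe_sub, EReal.coe_lt_coe_iff]
        rw [← Finset.sum_Ico_eq_sub _ hle]
        have hlhs : ∑ t ∈ Finset.range (k+3), (1:ℝ)/((t:ℝ)+1+c)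
            - ∑ t ∈ Finset.range (k+2), (1:ℝ)/((t:ℝ)+1+c) = 1/((k:ℝ)+3+c) := by
          rw [Finset.sum_range_succ]
          push_cast
          ring
        rw [hlhs]
        exact core_ii c hc' k a ha

end FairDiv
end
end

section
/- For p ∈ ℝ, the p-mean function φ_p satisfies Condition 4 if and only if p < 1. -/
open scoped BigOperators

noncomputable section

namespace FairDiv

open Set Real
private lemma strictConvexOn_rpow_neg {p : ℝ} (hp : p < 0) :
    StrictConvexOn ℝ (Set.Ioi 0) fun x : ℝ => x ^ p := by
  apply strictConvexOn_of_deriv2_pos (convex_Ioi 0)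
  · exact fun x hx => (Real.continuousAt_rpow_const x p (Or.inl (ne_of_gt hx))).continuousWithinAt
  · intro x hx
    rw [interior_Ioi] at hx
    have hev : deriv (fun y : ℝ => y ^ p) =ᶠ[nhds x] fun y => p * y ^ (p - 1) := by
      filter_upwards [Ioi_mem_nhds hx] with y hy
      exact Real.deriv_rpow_const y p
    have h2 : deriv^[2] (fun y : ℝ => y ^ p) x = p * ((p - 1) * x ^ (p - 2)) := by
      have : deriv^[2] (fun y : ℝ => y ^ p) x = deriv (fun y => p * y ^ (p - 1)) x := by
        simp only [Function.iterate_succ, Function.iterate_zero, Function.comp_apply, id]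
        exact hev.deriv_eq
      rw [this, deriv_const_mul _ (Real.differentiableAt_rpow_const_of_ne _ (ne_of_gt hx)),
        Real.deriv_rpow_const x (p - 1)]
      ring_nf
    rw [h2]
    have := Real.rpow_pos_of_pos hx (p - 2)
    nlinarith [mul_pos (mul_pos_of_neg_of_neg hp (show p - 1 < 0 by linarith)) this]

private lemma concave_step {f : ℝ → ℝ} {s : Set ℝ} (hf : StrictConcaveOn ℝ s f)
    {x : ℝ} (hx : x ∈ s) (hx2 : x + 2 ∈ s) :
    f (x + 2) - f (x + 1) < f (x + 1) - f x := by
  have h := hf.2 hx hx2 (by linarith) (by norm_num : (0:ℝ) < 1/2)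
    (by norm_num : (0:ℝ) < 1/2) (by norm_num)
  simp only [smul_eq_mul] at h
  rw [show (1/2 : ℝ) * x + 1/2 * (x + 2) = x + 1 by ring] at h
  linarith

private lemma convex_step {f : ℝ → ℝ} {s : Set ℝ} (hf : StrictConvexOn ℝ s f)
    {x : ℝ} (hx : x ∈ s) (hx2 : x + 2 ∈ s) :
    f (x + 1) - f x < f (x + 2) - f (x + 1) := by
  have h := hf.2 hx hx2 (by linarith) (by norm_num : (0:ℝ) < 1/2)
    (by norm_num : (0:ℝ) < 1/2) (by norm_num)
  simp only [smul_eq_mul] at h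
  rw [show (1/2 : ℝ) * x + 1/2 * (x + 2) = x + 1 by ring] at h
  linarith

theorem phi_cond4 (p : ℝ) :
    Cond4 (phi p) ↔ p < 1 := by
  constructor
  · intro h
    by_contra hp1
    push_neg at hp1
    have hp0 : 0 < p := lt_of_lt_of_le one_pos hp1
    have h0 := h 0
    have e : ∀ x : ℝ, phi p x = ((x ^ p : ℝ) : EReal) := fun x => if_pos hp0
    simp only [Delta, e, mul_one, Nat.cast_one, Nat.cast_zero, zero_add] at h0
    rw [← EReal.coe_sub, ← EReal.coe_sub, EReal.coe_lt_coe_iff] at h0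
    rw [Real.one_rpow, Real.zero_rpow (ne_of_gt hp0)] at h0
    have h2 : (2:ℝ) ^ (1:ℝ) ≤ (2:ℝ) ^ p := Real.rpow_le_rpow_of_exponent_le one_le_two hp1
    rw [Real.rpow_one] at h2
    norm_num at h0
    linarith
  · intro hp k
    rcases lt_trichotomy p 0 with hneg | rfl | hpos
    · -- p < 0
      have e : ∀ x : ℝ, 0 < x → phi p x = ((-(x ^ p) : ℝ) : EReal) := by
        intro x hx
        simp [phi, not_lt.2 hneg.le, hx.ne', hneg.ne]
      cases k with
      | zero =>
        have e0 : phi p 0 = ⊥ := by simp [phi, not_lt.2 hneg.le]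
        simp only [Delta, mul_one, Nat.cast_one, Nat.cast_zero, zero_add]
        rw [e0, EReal.sub_bot (by rw [e 1 one_pos]; exact EReal.coe_ne_bot _),
          e (1+1) (by norm_num), e 1 one_pos, ← EReal.coe_sub]
        exact EReal.coe_lt_top _
      | succ k =>
        have h1 : (0:ℝ) < (k:ℝ) + 1 := by positivity
        simp only [Delta, mul_one]
        push_cast
        rw [e ((k:ℝ)+1) h1, e ((k:ℝ)+1+1) (by linarith), e ((k:ℝ)+1+1+1) (by linarith),
          ← EReal.coe_sub, ← EReal.coe_sub, EReal.coe_lt_coe_iff]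
        have hs := convex_step (strictConvexOn_rpow_neg hneg)
          (show (k:ℝ)+1 ∈ Ioi 0 from h1) (show (k:ℝ)+1+2 ∈ Ioi 0 by simp; linarith)
        rw [show (k:ℝ)+1+2 = (k:ℝ)+1+1+1 by ring] at hs
        linarith
    · -- p = 0
      have e : ∀ x : ℝ, 0 < x → phi 0 x = ((Real.log x : ℝ) : EReal) := by
        intro x hx
        simp [phi, hx.ne']
      cases k with
      | zero =>
        have e0 : phi 0 0 = ⊥ := by simp [phi]
        simp only [Delta, mul_one, Nat.cast_one, Nat.cast_zero, zero_add]
        rw [e0, EReal.sub_bot (by rw [e 1 one_pos]; exact EReal.coe_ne_bot _),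
          e (1+1) (by norm_num), e 1 one_pos, ← EReal.coe_sub]
        exact EReal.coe_lt_top _
      | succ k =>
        have h1 : (0:ℝ) < (k:ℝ) + 1 := by positivity
        simp only [Delta, mul_one]
        push_cast
        rw [e ((k:ℝ)+1) h1, e ((k:ℝ)+1+1) (by linarith), e ((k:ℝ)+1+1+1) (by linarith),
          ← EReal.coe_sub, ← EReal.coe_sub, EReal.coe_lt_coe_iff]
        have hs := concave_step strictConcaveOn_log_Ioi
          (show (k:ℝ)+1 ∈ Ioi 0 from h1) (show (k:ℝ)+1+2 ∈ Ioi 0 by simp; linarith)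
        rw [show (k:ℝ)+1+2 = (k:ℝ)+1+1+1 by ring] at hs
        linarith
    · -- 0 < p < 1
      have e : ∀ x : ℝ, phi p x = ((x ^ p : ℝ) : EReal) := fun x => if_pos hpos
      simp only [Delta, e, mul_one]
      push_cast
      rw [← EReal.coe_sub, ← EReal.coe_sub, EReal.coe_lt_coe_iff]
      have hs := concave_step (Real.strictConcaveOn_rpow hpos hp)
        (show (k:ℝ) ∈ Ici 0 from mem_Ici.mpr (Nat.cast_nonneg k))
        (show (k:ℝ)+2 ∈ Ici 0 by simp; positivity)
      rw [show (k:ℝ)+2 = (k:ℝ)+1+1 by ring] at hs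
      linarith


end FairDiv
end
end

section
/- Let f : ℝ≥0 → ℝ ∪ {−∞} be a strictly increasing function. If f satisfies Condition 6a, then it satisfies Condition 5. -/
open scoped BigOperators

noncomputable section

namespace FairDiv

private lemma dec_aux (g : ℕ → ℝ) (n₀ : ℕ)
    (hunit : ∀ w : ℕ, n₀ + 1 ≤ w → g (w + 1) - g w < g w - g (w - 1)) :
    ∀ (t v : ℕ), n₀ + 1 ≤ v → g (v + t + 1) - g v < g (v + t) - g (v - 1) := by
  intro t
  induction t with
  | zero => intro v hv; simpa using hunit v hv
  | succ t ih =>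
    intro v hv
    have h1 := hunit (v + t + 1) (by omega)
    have e : v + t + 1 - 1 = v + t := by omega
    rw [e] at h1
    have h2 := ih v hv
    have e1 : v + (t + 1) + 1 = v + t + 1 + 1 := by omega
    have e2 : v + (t + 1) = v + t + 1 := by omega
    rw [e1, e2]
    linarith

private lemma dec_le (g : ℕ → ℝ) (n₀ : ℕ)
    (hunit : ∀ w : ℕ, n₀ + 1 ≤ w → g (w + 1) - g w < g w - g (w - 1)) :
    ∀ (σ v t : ℕ), n₀ ≤ v → g (v + σ + t + 1) - g (v + σ) ≤ g (v + t + 1) - g v := by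
  intro σ
  induction σ with
  | zero => intro v t hv; simp
  | succ σ ih =>
    intro v t hv
    have h1 := dec_aux g n₀ hunit t (v + σ + 1) (by omega)
    have e : v + σ + 1 - 1 = v + σ := by omega
    rw [e] at h1
    have h2 := ih v t hv
    have e1 : v + (σ + 1) + t + 1 = v + σ + 1 + t + 1 := by omega
    have e2 : v + (σ + 1) = v + σ + 1 := by omega
    rw [e1, e2]
    have e3 : v + σ + 1 + t = v + σ + t + 1 := by omega
    have e4 : v + σ + 1 + t + 1 = v + σ + t + 1 + 1 := by omega
    rw [e3] at h1
    rw [e4]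
    linarith

private lemma core1 (g : ℕ → ℝ) (n₀ : ℕ)
    (h6 : ∀ k a b : ℕ, 1 ≤ k → 1 ≤ a → 1 ≤ b → n₀ + 1 ≤ k * b →
      g ((k + 1) * a) - g (k * a) < g ((k + 1) * b - 1) - g (k * b - 1))
    (a b k m : ℕ) (ha : 1 ≤ a) (hb : 1 ≤ b) (hm : n₀ + 1 ≤ m) (hmk : m ≤ (k + 1) * b) :
    g ((k + 1) * a + a) - g ((k + 1) * a) < g (m - 1 + b) - g (m - 1) := by
  have hunit : ∀ w : ℕ, n₀ + 1 ≤ w → g (w + 1) - g w < g w - g (w - 1) := by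
    intro w hw
    have := h6 w 1 1 (by omega) le_rfl le_rfl (by omega)
    simpa using this
  have h1 := h6 (k + 1) a b (by omega) ha hb (le_trans hm hmk)
  have eA : (k + 1 + 1) * a = (k + 1) * a + a := by ring
  have eB : (k + 1 + 1) * b = (k + 1) * b + b := by ring
  rw [eA, eB] at h1
  set X := (k + 1) * a with hX
  set Y := (k + 1) * b with hY
  -- h1 : g (X + a) - g X < g (Y + b - 1) - g (Y - 1)
  have h2 := dec_le g n₀ hunit (Y - m) (m - 1) (b - 1) (by omega)
  have e1 : m - 1 + (Y - m) + (b - 1) + 1 = Y + b - 1 := by omega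
  have e2 : m - 1 + (Y - m) = Y - 1 := by omega
  have e3 : m - 1 + (b - 1) + 1 = m - 1 + b := by omega
  rw [e1, e2, e3] at h2
  linarith

private lemma core2 (g : ℕ → ℝ) (n₀ : ℕ) (hn : n₀ ≤ 1)
    (h6 : ∀ k a b : ℕ, 1 ≤ k → 1 ≤ a → 1 ≤ b → n₀ + 1 ≤ k * b →
      g ((k + 1) * a) - g (k * a) < g ((k + 1) * b - 1) - g (k * b - 1))
    (a k : ℕ) (ha : 1 ≤ a) :
    g (k + 3) - g (k + 2) < g ((k + 1) * a + a) - g ((k + 1) * a) := by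
  have hunit : ∀ w : ℕ, n₀ + 1 ≤ w → g (w + 1) - g w < g w - g (w - 1) := by
    intro w hw
    have := h6 w 1 1 (by omega) le_rfl le_rfl (by omega)
    simpa using this
  have hk2a : k + 2 ≤ (k + 2) * a := Nat.le_mul_of_pos_right (k + 2) ha
  have h1 := h6 (k + 2) 1 a (by omega) le_rfl ha (by omega)
  have eA : (k + 2 + 1) * a = (k + 1) * a + a + a := by ring
  have eB : (k + 2) * a = (k + 1) * a + a := by ring
  rw [mul_one, mul_one, eA, eB] at h1
  set X := (k + 1) * a with hX
  have hX1 : 1 ≤ X := by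
    have : 1 * 1 ≤ (k + 1) * a := Nat.mul_le_mul (by omega) ha
    omega
  -- h1 : g (k+3) - g (k+2) < g (X + a + a - 1) - g (X + a - 1)
  have h2 := dec_le g n₀ hunit (a - 1) X (a - 1) (by omega)
  have e1 : X + (a - 1) + (a - 1) + 1 = X + a + a - 1 := by omega
  have e2 : X + (a - 1) = X + a - 1 := by omega
  have e3 : X + (a - 1) + 1 = X + a := by omega
  rw [e1, e3, e2] at h2
  have e0 : k + 2 + 1 = k + 3 := by omega
  rw [e0] at h1
  linarith


private lemma h6_of (f : ℝ → EReal) (hcond : Cond6a f) (n₀ : ℕ) (hn : n₀ ≤ 1) (g : ℕ → ℝ)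
    (hok : ∀ n : ℕ, n₀ ≤ n → f (n : ℝ) = ((g n : ℝ) : EReal)) :
    ∀ k a b : ℕ, 1 ≤ k → 1 ≤ a → 1 ≤ b → n₀ + 1 ≤ k * b →
      g ((k + 1) * a) - g (k * a) < g ((k + 1) * b - 1) - g (k * b - 1) := by
  intro k a b hk ha hb hguard
  have H := hcond k a b hk ha hb
  simp only [Delta] at H
  have hka : 1 ≤ k * a := Nat.mul_pos hk ha
  have hkb1 : 1 ≤ (k + 1) * b := Nat.mul_pos (by omega) hb
  have hkb : 1 ≤ k * b := Nat.mul_pos hk hb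
  have hkkb : k * b ≤ (k + 1) * b := Nat.mul_le_mul_right b (by omega)
  have e1 : ((k : ℝ) + 1) * (a : ℝ) = (((k + 1) * a : ℕ) : ℝ) := by push_cast; ring
  have e2 : (k : ℝ) * (a : ℝ) = ((k * a : ℕ) : ℝ) := by push_cast; ring
  have e3 : ((k : ℝ) + 1) * (b : ℝ) - 1 = (((k + 1) * b - 1 : ℕ) : ℝ) := by
    rw [Nat.cast_sub hkb1]; push_cast; ring
  have e4 : (k : ℝ) * (b : ℝ) - 1 = ((k * b - 1 : ℕ) : ℝ) := by
    rw [Nat.cast_sub hkb]; push_cast; ring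
  rw [e1, e2, e3, e4, hok _ (le_trans hn (Nat.mul_pos (by omega) ha)), hok _ (le_trans hn hka),
    hok _ (Nat.le_sub_one_of_lt (lt_of_lt_of_le hguard hkkb)),
    hok _ (Nat.le_sub_one_of_lt hguard)] at H
  rw [← EReal.coe_sub, ← EReal.coe_sub, EReal.coe_lt_coe_iff] at H
  exact H

theorem cond6a_implies_cond5 (f : ℝ → EReal)
    (hfmono : StrictMonoOn f (Set.Ici (0 : ℝ)))
    (hftop : ∀ x : ℝ, 0 ≤ x → f x ≠ ⊤)
    (hcond : Cond6a f) :
    Cond5 f := by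
  intro a b k l r ha hb hba hlt
  have hne : ∀ x : ℝ, 0 < x → f x ≠ ⊥ := fun x hx =>
    (hfmono (Set.mem_Ici.mpr le_rfl) (Set.mem_Ici.mpr hx.le) hx).ne_bot
  set g : ℕ → ℝ := fun n => (f n).toReal with hgdef
  have hokpos : ∀ n : ℕ, 1 ≤ n → f (n : ℝ) = ((g n : ℝ) : EReal) := by
    intro n hn
    exact (EReal.coe_toReal (hftop _ (Nat.cast_nonneg n))
      (hne _ (by exact_mod_cast hn))).symm
  have hk1a : 1 ≤ (k + 1) * a := Nat.mul_pos (by omega) ha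
  have dA : Delta f (k + 1) (a : ℝ)
      = ((g ((k + 1) * a + a) : ℝ) : EReal) - ((g ((k + 1) * a) : ℝ) : EReal) := by
    have e1 : (((k + 1 : ℕ) : ℝ) + 1) * (a : ℝ) = (((k + 1) * a + a : ℕ) : ℝ) := by
      push_cast; ring
    have e2 : ((k + 1 : ℕ) : ℝ) * (a : ℝ) = (((k + 1) * a : ℕ) : ℝ) := by push_cast; ring
    rw [Delta, e1, e2, hokpos _ (le_trans hk1a (Nat.le_add_right _ _)), hokpos _ hk1a]
  have dB : Delta f (k + 2) 1
      = ((g (k + 3) : ℝ) : EReal) - ((g (k + 2) : ℝ) : EReal) := by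
    have e1 : (((k + 2 : ℕ) : ℝ) + 1) * (1 : ℝ) = ((k + 3 : ℕ) : ℝ) := by push_cast; ring
    have e2 : ((k + 2 : ℕ) : ℝ) * (1 : ℝ) = ((k + 2 : ℕ) : ℝ) := by push_cast; ring
    rw [Delta, e1, e2, hokpos _ (by omega), hokpos _ (by omega)]
  have h6one := h6_of f hcond 1 le_rfl g hokpos
  constructor
  · -- part (i)
    have e5 : ((l : ℝ) + 1) * (b : ℝ) + (r : ℝ) * (a : ℝ) = ((l * b + r * a + b : ℕ) : ℝ) := by
      push_cast; ring
    have e6 : (l : ℝ) * (b : ℝ) + (r : ℝ) * (a : ℝ) = ((l * b + r * a : ℕ) : ℝ) := by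
      push_cast; ring
    rw [e5, e6, dA]
    by_cases hbot : f 0 = ⊥
    · rcases Nat.eq_zero_or_pos (l * b + r * a) with hM0 | hM1
      · -- M = 0 and f 0 = ⊥ : RHS is ⊤
        rw [hM0]
        have eb : ((0 + b : ℕ) : ℝ) = ((b : ℕ) : ℝ) := by norm_num
        have e0 : (((0 : ℕ)) : ℝ) = (0 : ℝ) := by norm_num
        rw [eb, e0, hbot, EReal.sub_bot]
        · rw [← EReal.coe_sub]; exact EReal.coe_lt_top _
        · exact hne _ (by exact_mod_cast hb)
      · -- M ≥ 1 : work with n₀ = 1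
        have hcore := core1 g 1 h6one a b k (l * b + r * a + 1) ha hb (by omega) (by omega)
        simp only [Nat.add_sub_cancel] at hcore
        rw [hokpos _ (by omega), hokpos _ hM1, ← EReal.coe_sub, ← EReal.coe_sub,
          EReal.coe_lt_coe_iff]
        exact hcore
    · -- f 0 ≠ ⊥ : everything is real, n₀ = 0
      have hok0 : ∀ n : ℕ, 0 ≤ n → f (n : ℝ) = ((g n : ℝ) : EReal) := by
        intro n _
        rcases Nat.eq_zero_or_pos n with h0 | h1
        · subst h0
          have e : g 0 = (f ((0 : ℕ) : ℝ)).toReal := rfl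
          rw [e, Nat.cast_zero]
          exact (EReal.coe_toReal (hftop 0 le_rfl) hbot).symm
        · exact hokpos n h1
      have h6zero := h6_of f hcond 0 (by omega) g hok0
      have hcore := core1 g 0 h6zero a b k (l * b + r * a + 1) ha hb (by omega) (by omega)
      simp only [Nat.add_sub_cancel] at hcore
      rw [hok0 _ (by omega), hok0 _ (by omega), ← EReal.coe_sub, ← EReal.coe_sub,
        EReal.coe_lt_coe_iff]
      exact hcore
  · -- part (ii)
    rw [dA, dB, ← EReal.coe_sub, ← EReal.coe_sub, EReal.coe_lt_coe_iff]
    exact core2 g 1 le_rfl h6one a k ha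

end FairDiv
end
end

section
/- For c ∈ ℝ≥0, the modified logarithmic function λ_c satisfies Condition 6b if and only if 0 ≤ c ≤ 1. -/
open scoped BigOperators

noncomputable section

namespace FairDiv

lemma lam_eq (c t : ℝ) (h : 0 < t + c) : lam c t = ((Real.log (t + c) : ℝ) : EReal) := by
  simp [lam, h.ne']

theorem lam_cond6b (c : ℝ) (hc : 0 ≤ c) :
    Cond6b (lam c) ↔ (0 ≤ c ∧ c ≤ 1) := by
  constructor
  · intro h
    refine ⟨hc, ?_⟩
    by_contra hc1
    push_neg at hc1
    have hc0 : 0 < c := lt_trans one_pos hc1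
    set a : ℕ := Nat.ceil (c / (c - 1)) with ha_def
    have hapos : 0 < a := Nat.ceil_pos.mpr (div_pos hc0 (by linarith))
    have haR : c / (c - 1) ≤ (a : ℝ) := Nat.le_ceil _
    have haR' : c ≤ (a : ℝ) * (c - 1) := by
      rw [div_le_iff₀ (by linarith : (0:ℝ) < c - 1)] at haR
      linarith
    have haRpos : (0:ℝ) < (a:ℝ) := by exact_mod_cast hapos
    have key := h a 1 a 0 hapos one_pos (by
      push_cast
      rw [div_self (ne_of_gt haRpos)]
      norm_num)
    rw [lam_eq c _ (by push_cast; linarith), lam_eq c _ (by push_cast; linarith),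
        lam_eq c _ (by push_cast; linarith), lam_eq c _ (by push_cast; linarith)] at key
    rw [← EReal.coe_sub, ← EReal.coe_sub, EReal.coe_lt_coe_iff] at key
    have h1 : Real.log ((1 + c) * ((a:ℝ) + c)) ≤ Real.log (c * ((a:ℝ) + (a:ℝ) + c)) := by
      apply Real.log_le_log (by positivity)
      nlinarith
    rw [Real.log_mul (by positivity) (by positivity),
        Real.log_mul (by positivity) (by positivity)] at h1
    push_cast at key
    simp only [zero_add] at key
    linarith
  · rintro ⟨_, hc1⟩
    intro a b x y ha hb hxy
    have haR : (0:ℝ) < (a:ℝ) := by exact_mod_cast ha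
    have hbR : (0:ℝ) < (b:ℝ) := by exact_mod_cast hb
    have ha1 : (1:ℝ) ≤ (a:ℝ) := by exact_mod_cast ha
    have hb1 : (1:ℝ) ≤ (b:ℝ) := by exact_mod_cast hb
    have hyR : (0:ℝ) ≤ (y:ℝ) := Nat.cast_nonneg y
    have hxdiv : (0:ℝ) < (x:ℝ)/(a:ℝ) := lt_of_lt_of_le (by positivity) hxy
    have hxpos : (0:ℝ) < (x:ℝ) := by
      have := mul_pos hxdiv haR
      rwa [div_mul_cancel₀ _ (ne_of_gt haR)] at this
    rw [div_le_div_iff₀ hbR haR] at hxy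
    have hkey : ((x:ℝ) + (a:ℝ) + c) * ((y:ℝ) + c) < ((y:ℝ) + (b:ℝ) + c) * ((x:ℝ) + c) := by
      nlinarith [mul_nonneg (sub_nonneg.2 hb1) hc, mul_nonneg (sub_nonneg.2 ha1) (sub_nonneg.2 hc1),
        mul_nonneg hc hxpos.le, mul_nonneg hc hyR]
    by_cases hy : (y:ℝ) + c = 0
    · have hyb : (0:ℝ) < (y:ℝ) + (b:ℝ) + c := by linarith
      rw [lam_eq c _ (by linarith), lam_eq c _ (by linarith), lam_eq c _ hyb]
      have : lam c (y:ℝ) = ⊥ := by simp [lam, hy]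
      rw [this, ← EReal.coe_sub, EReal.coe_sub_bot]
      exact lt_top_iff_ne_top.mpr (EReal.coe_ne_top _)
    · have hypos : (0:ℝ) < (y:ℝ) + c := lt_of_le_of_ne (by positivity) (Ne.symm hy)
      rw [lam_eq c _ (by linarith), lam_eq c _ (by linarith),
          lam_eq c _ (by linarith), lam_eq c _ hypos]
      rw [← EReal.coe_sub, ← EReal.coe_sub, EReal.coe_lt_coe_iff]
      have hlog : Real.log (((x:ℝ) + (a:ℝ) + c) * ((y:ℝ) + c))
          < Real.log (((y:ℝ) + (b:ℝ) + c) * ((x:ℝ) + c)) :=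
        Real.log_lt_log (by positivity) hkey
      rw [Real.log_mul (by positivity) (ne_of_gt hypos),
          Real.log_mul (by positivity) (by positivity)] at hlog
      linarith

end FairDiv
end
end

section
/- For every c with −1 ≤ c < −1/2, the modified harmonic function h_c does not satisfy Condition 6a; that is, there exist k, a, b ∈ ℤ>0 such that h_c((k+1)b−1) − h_c(kb−1) ≤ h_c((k+1)a) − h_c(ka). -/
open scoped BigOperators

noncomputable section

namespace FairDiv

private noncomputable def Gaux (c : ℝ) (x : ℕ) : ℝ :=
  ∑ t ∈ Finset.range x, (1:ℝ) / ((t:ℝ) + 1 + c)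

private lemma hmod_eq_Gaux (c : ℝ) (x : ℕ) (hx : 1 ≤ x) :
    hmod c x = ((Gaux c x : ℝ) : EReal) := by
  unfold hmod Gaux
  by_cases hc : c = -1
  · subst hc
    rw [if_pos rfl, if_neg (by omega)]
    congr 1
    rw [show x = (x-1) + 1 by omega, Finset.sum_range_succ']
    simp
  · rw [if_neg hc]

private lemma Gaux_succ (c : ℝ) (x : ℕ) : Gaux c (x+1) - Gaux c x = 1/((x:ℝ) + 1 + c) := by
  unfold Gaux; rw [Finset.sum_range_succ]; ring

private lemma Gaux_diff (c : ℝ) (k b : ℕ) (hk : 1 ≤ k) (hb : 1 ≤ b) :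
    Gaux c ((k+1)*b - 1) - Gaux c (k*b - 1) =
      ∑ j ∈ Finset.range b, 1/((k:ℝ)*(b:ℝ) + (j:ℝ) + c) := by
  unfold Gaux
  have hkb : 1 ≤ k*b := Nat.one_le_iff_ne_zero.2 (by positivity)
  have hexp : (k+1)*b = k*b + b := by ring
  rw [← Finset.sum_Ico_eq_sub _ (by omega : k*b - 1 ≤ (k+1)*b - 1)]
  rw [Finset.sum_Ico_eq_sum_range]
  rw [show ((k+1)*b - 1) - (k*b - 1) = b by omega]
  apply Finset.sum_congr rfl
  intro j _
  congr 1
  push_cast [Nat.cast_sub hkb]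
  ring

private lemma pair_bound_aux (u v u0 v0 : ℝ) (hu0 : 0 < u0) (hv0 : 0 < v0)
    (h1 : u0 ≤ u) (h2 : u0 ≤ v) (hM : u + v = u0 + v0) :
    1/u + 1/v ≤ (u0 + v0)/(u0*v0) := by
  have hu : 0 < u := lt_of_lt_of_le hu0 h1
  have hv : 0 < v := lt_of_lt_of_le hu0 h2
  have huv : u0*v0 ≤ u*v := by nlinarith
  calc 1/u + 1/v = (u+v)/(u*v) := by field_simp; ring
    _ = (u0+v0)/(u*v) := by rw [hM]
    _ ≤ (u0+v0)/(u0*v0) := by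
        apply div_le_div_of_nonneg_left _ (by positivity) huv
        linarith

private lemma key_sum_bound (c : ℝ) (hc1 : -1 ≤ c) (hc2 : c < -1/2) (k b : ℕ)
    (hk : 2 ≤ (k:ℝ) * (-1 - 2*c)) (hb : b = 3*k + 2) :
    ∑ j ∈ Finset.range b, 1/((k:ℝ)*(b:ℝ) + (j:ℝ) + c) ≤ 1/((k:ℝ) + 1 + c) := by
  set K := (k:ℝ) with hK
  have hK2 : 2 ≤ K := by
    have h1 : K * (-1 - 2*c) ≤ K * 1 := by
      apply mul_le_mul_of_nonneg_left (by linarith) (by positivity)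
    linarith
  have hB : (b:ℝ) = 3*K + 2 := by rw [hb]; push_cast; ring
  set B := (b:ℝ) with hBdef
  have hB8 : 8 ≤ B := by linarith
  set u0 : ℝ := K*B + c with hu0def
  set v0 : ℝ := (K+1)*B - 1 + c with hv0def
  have hu0 : 0 < u0 := by nlinarith
  have hv0 : 0 < v0 := by nlinarith
  set S := ∑ j ∈ Finset.range b, 1/(K*B + (j:ℝ) + c) with hS
  have hrefl : ∑ j ∈ Finset.range b, 1/(K*B + ((b - 1 - j : ℕ):ℝ) + c) = S := by
    rw [hS]
    exact Finset.sum_range_reflect (fun j => 1/(K*B + (j:ℝ) + c)) b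
  have h2S : 2 * S ≤ B * ((u0 + v0)/(u0*v0)) := by
    have : 2 * S = ∑ j ∈ Finset.range b,
        (1/(K*B + (j:ℝ) + c) + 1/(K*B + ((b - 1 - j : ℕ):ℝ) + c)) := by
      rw [Finset.sum_add_distrib, hrefl, hS]; ring
    rw [this]
    calc ∑ j ∈ Finset.range b,
        (1/(K*B + (j:ℝ) + c) + 1/(K*B + ((b - 1 - j : ℕ):ℝ) + c))
        ≤ ∑ _j ∈ Finset.range b, (u0 + v0)/(u0*v0) := by
          apply Finset.sum_le_sum
          intro j hj
          rw [Finset.mem_range] at hj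
          have hjb : ((b - 1 - j : ℕ):ℝ) = B - 1 - (j:ℝ) := by
            push_cast [Nat.cast_sub (by omega : j ≤ b - 1), Nat.cast_sub (by omega : 1 ≤ b)]
            ring
          rw [hjb]
          apply pair_bound_aux _ _ _ _ hu0 hv0
          · have : (0:ℝ) ≤ (j:ℝ) := Nat.cast_nonneg j
            rw [hu0def]; linarith
          · have hj2 : ((j:ℝ)) + 1 ≤ B := by
              rw [hBdef]; exact_mod_cast (Nat.succ_le_of_lt hj)
            rw [hu0def]; linarith
          · rw [hu0def, hv0def]; ring
      _ = B * ((u0 + v0)/(u0*v0)) := by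
          rw [Finset.sum_const, Finset.card_range]
          rw [nsmul_eq_mul]
  have hfin : B * ((u0 + v0)/(u0*v0)) ≤ 2 / (K + 1 + c) := by
    rw [mul_div_assoc']
    have hKc : (0:ℝ) < K + 1 + c := by linarith
    rw [div_le_div_iff₀ (by positivity) hKc]
    rw [hu0def, hv0def, hB]
    nlinarith [mul_nonneg (by linarith : (0:ℝ) ≤ K*(-1-2*c) - 2) (sq_nonneg (3*K+2)),
      mul_nonneg (by linarith : (0:ℝ) ≤ -2*c-1) (by linarith : (0:ℝ) ≤ K - 2),
      mul_nonneg (by linarith : (0:ℝ) ≤ -c) (sq_nonneg (3*K+2)), sq_nonneg K]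
  have hfin2 : S ≤ 1 / (K + 1 + c) := by
    have h := h2S.trans hfin
    have h2 : (2:ℝ) / (K+1+c) = 2 * (1/(K+1+c)) := by ring
    rw [h2] at h
    linarith
  exact hfin2

theorem hmod_not_cond6a (c : ℝ) (hc1 : -1 ≤ c) (hc2 : c < -1/2) :
    ∃ k a b : ℕ, 0 < k ∧ 0 < a ∧ 0 < b ∧
      hmod c ((k + 1) * b - 1) - hmod c (k * b - 1) ≤
        hmod c ((k + 1) * a) - hmod c (k * a) := by
  have heps : (0:ℝ) < -1 - 2*c := by linarith
  set k : ℕ := ⌈(2:ℝ)/(-1-2*c)⌉₊ with hkdef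
  have hk : 2 ≤ (k:ℝ) * (-1 - 2*c) := by
    have h1 : (2:ℝ)/(-1-2*c) ≤ (k:ℝ) := Nat.le_ceil _
    rw [div_le_iff₀ heps] at h1
    linarith
  have hK2 : 2 ≤ (k:ℝ) := by
    have h1 : (k:ℝ) * (-1 - 2*c) ≤ (k:ℝ) * 1 := by
      apply mul_le_mul_of_nonneg_left (by linarith) (by positivity)
    linarith
  have hk2 : 2 ≤ k := by exact_mod_cast hK2
  refine ⟨k, 1, 3*k+2, by omega, by omega, by omega, ?_⟩
  set b : ℕ := 3*k+2 with hbdef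
  have hkb2 : 2 ≤ k * b := by
    calc 2 = 2*1 := by ring
    _ ≤ k * b := Nat.mul_le_mul hk2 (by omega)
  have hkb2' : k*b ≤ (k+1)*b := Nat.mul_le_mul_right _ (by omega)
  rw [hmod_eq_Gaux c ((k+1)*b - 1) (by omega),
      hmod_eq_Gaux c (k*b - 1) (by omega),
      hmod_eq_Gaux c ((k+1)*1) (by omega),
      hmod_eq_Gaux c (k*1) (by omega),
      ← EReal.coe_sub, ← EReal.coe_sub, EReal.coe_le_coe_iff]
  rw [Gaux_diff c k b (by omega) (by omega)]
  rw [mul_one, mul_one, Gaux_succ]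
  exact key_sum_bound c hc1 hc2 k b hk hbdef


end FairDiv
end
end
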